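/- For any real v and b > 0, the quantity h(v) = (e^{b²}Φ(v+b) − Φ(v) − e^{b²/2 − bv}(Φ(v) − Φ(v−b))) / (e^{b²} − 1) satisfies 0 < h(v) < 1, where Φ is the standard normal CDF. -/

import Mathlib

open MeasureTheory ProbabilityTheory Real Set Filter

noncomputable def Φ (x : ℝ) : ℝ := ∫ t in Set.Iic x, Real.exp (-t^2/2) / Real.sqrt (2*Real.pi)

noncomputable def φf (t : ℝ) : ℝ := Real.exp (-t^2/2) / Real.sqrt (2*Real.pi)

lemma Φ_eq (x : ℝ) : Φ x = ∫ t in Set.Iic x, φf t := rfl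

lemma φf_pos (t : ℝ) : 0 < φf t := by
  unfold φf
  have : 0 < Real.sqrt (2*Real.pi) := Real.sqrt_pos.2 (by positivity)
  positivity

lemma gint : Integrable φf := by
  have h : Integrable (fun t : ℝ => Real.exp (-(1/2 : ℝ) * t ^ 2)) :=
    integrable_exp_neg_mul_sq (by norm_num)
  have := h.div_const (Real.sqrt (2*Real.pi))
  convert this using 2 with t
  unfold φf; ring_nf

lemma gint_total : ∫ t, φf t = 1 := by
  unfold φf
  rw [integral_div]
  have h : ∫ t : ℝ, Real.exp (-(1/2 : ℝ) * t ^ 2) = Real.sqrt (Real.pi / (1/2)) :=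
    integral_gaussian (1/2)
  have h2 : (fun t : ℝ => Real.exp (-t^2/2)) = fun t : ℝ => Real.exp (-(1/2 : ℝ) * t ^ 2) := by
    funext t; ring_nf
  rw [h2, h]
  rw [div_eq_one_iff_eq (by positivity)]
  norm_num [mul_comm]

lemma shiftIic (f : ℝ → ℝ) (a u : ℝ) : ∫ t in Iic u, f (t + a) = ∫ t in Iic (u + a), f t := by
  have := (measurePreserving_add_right (volume : Measure ℝ) a).setIntegral_preimage_emb
    (MeasurableEquiv.addRight a).measurableEmbedding f (Iic (u+a))
  simpa [preimage_add_const_Iic] using this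

lemma shiftIoc (f : ℝ → ℝ) (a u w : ℝ) :
    ∫ t in Ioc u w, f (t + a) = ∫ t in Ioc (u + a) (w + a), f t := by
  have := (measurePreserving_add_right (volume : Measure ℝ) a).setIntegral_preimage_emb
    (MeasurableEquiv.addRight a).measurableEmbedding f (Ioc (u+a) (w+a))
  simpa [preimage_add_const_Ioc] using this

lemma φf_shift (b t : ℝ) : φf (t + b) = Real.exp (-b^2/2 - b*t) * φf t := by
  unfold φf
  rw [mul_div_assoc', ← Real.exp_add]
  ring_nf

lemma gexp (c d : ℝ) : Integrable (fun t => Real.exp (c - d*t) * φf t) := by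
  have h : (fun t => Real.exp (c - d*t) * φf t)
      = fun t => Real.exp (c + d^2/2) * φf (t + d) := by
    funext t
    unfold φf
    rw [mul_div_assoc', mul_div_assoc', ← Real.exp_add, ← Real.exp_add]
    ring_nf
  rw [h]
  exact (gint.comp_add_right d).const_mul _

lemma keyA (v b : ℝ) : Real.exp (b^2) * Φ (v+b) = ∫ t in Iic v, Real.exp (b^2/2 - b*t) * φf t := by
  have h : ∀ t : ℝ, Real.exp (b^2/2 - b*t) * φf t = Real.exp (b^2) * φf (t + b) := by
    intro t
    rw [φf_shift, ← mul_assoc, ← Real.exp_add]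
    ring_nf
  calc Real.exp (b^2) * Φ (v+b) = Real.exp (b^2) * ∫ t in Iic v, φf (t + b) := by
        rw [shiftIic φf b v, Φ_eq]
    _ = ∫ t in Iic v, Real.exp (b^2) * φf (t + b) := (integral_const_mul _ _).symm
    _ = ∫ t in Iic v, Real.exp (b^2/2 - b*t) * φf t := by simp_rw [h]

lemma keyB (v b : ℝ) : Φ v = ∫ t in Iic (v-b), Real.exp (-b^2/2 - b*t) * φf t := by
  have h : ∀ t : ℝ, Real.exp (-b^2/2 - b*t) * φf t = φf (t + b) := fun t => (φf_shift b t).symm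
  simp_rw [h, shiftIic φf b (v-b), sub_add_cancel, Φ_eq]

lemma keyC {y x : ℝ} (h : y ≤ x) : Φ x - Φ y = ∫ t in Ioc y x, φf t := by
  rw [Φ_eq, Φ_eq]
  have hu := setIntegral_union (Set.Iic_disjoint_Ioc le_rfl) measurableSet_Ioc
    (gint.integrableOn (s := Iic y)) (gint.integrableOn (s := Ioc y x))
  rw [Iic_union_Ioc_eq_Iic h] at hu
  linarith

lemma keyD (v b : ℝ) (hb : 0 ≤ b) :
    Φ (v+b) - Φ v = ∫ t in Ioc (v-b) v, Real.exp (-b^2/2 - b*t) * φf t := by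
  have h : ∀ t : ℝ, Real.exp (-b^2/2 - b*t) * φf t = φf (t + b) := fun t => (φf_shift b t).symm
  simp_rw [h, shiftIoc φf b (v-b) v, sub_add_cancel]
  exact keyC (by linarith)

lemma posIoc (g : ℝ → ℝ) {u w : ℝ} (hg : IntegrableOn g (Ioc u w)) (hw : u < w)
    (hpos : ∀ t, 0 < g t) : 0 < ∫ t in Ioc u w, g t := by
  rw [← intervalIntegral.integral_of_le hw.le]
  refine intervalIntegral.intervalIntegral_pos_of_pos_on ?_ (fun x _ => hpos x) hw
  rw [intervalIntegrable_iff_integrableOn_Ioc_of_le hw.le]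
  exact hg

lemma posIic (g : ℝ → ℝ) {w : ℝ} (hg : IntegrableOn g (Iic w)) (hpos : ∀ t, 0 < g t) :
    0 < ∫ t in Iic w, g t := by
  have h1 : 0 < ∫ t in Ioc (w-1) w, g t :=
    posIoc g (hg.mono_set (Ioc_subset_Iic_self.trans (Iic_subset_Iic.2 le_rfl))) (by linarith) hpos
  refine h1.trans_le (setIntegral_mono_set hg ?_ ?_)
  · exact Eventually.of_forall (fun t => (hpos t).le)
  · exact HasSubset.Subset.eventuallyLE Ioc_subset_Iic_self

lemma Φ_lt_one (x : ℝ) : Φ x < 1 := by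
  have hu := setIntegral_union (Set.Iic_disjoint_Ioi (le_refl x)) measurableSet_Ioi
    (gint.integrableOn (s := Iic x)) (gint.integrableOn (s := Ioi x))
  rw [Iic_union_Ioi] at hu
  rw [setIntegral_univ, gint_total] at hu
  have hpos : 0 < ∫ t in Ioi x, φf t := by
    have h1 : 0 < ∫ t in Ioc x (x+1), φf t :=
      posIoc φf gint.integrableOn (by linarith) φf_pos
    refine h1.trans_le (setIntegral_mono_set gint.integrableOn ?_ ?_)
    · exact Eventually.of_forall (fun t => (φf_pos t).le)
    · exact HasSubset.Subset.eventuallyLE Ioc_subset_Ioi_self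
  rw [Φ_eq]
  linarith

theorem stmt12 (v b : ℝ) (hb : 0 < b) :
    0 < (Real.exp (b^2) * Φ (v+b) - Φ v - Real.exp (b^2/2 - b*v) * (Φ v - Φ (v-b))) /
        (Real.exp (b^2) - 1) ∧
    (Real.exp (b^2) * Φ (v+b) - Φ v - Real.exp (b^2/2 - b*v) * (Φ v - Φ (v-b))) /
        (Real.exp (b^2) - 1) < 1 := by
  have hexp : 1 < Real.exp (b^2) := by
    have := Real.exp_lt_exp.2 (show (0:ℝ) < b^2 by positivity)
    simpa using this
  have hden : 0 < Real.exp (b^2) - 1 := by linarith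
  set c := Real.exp (b^2/2 - b*v) with hcdef
  have if1 : Integrable (fun t => Real.exp (b^2/2 - b*t) * φf t) := gexp (b^2/2) b
  have if2 : Integrable (fun t => Real.exp (-b^2/2 - b*t) * φf t) := gexp (-b^2/2) b
  have e1 := keyA v b
  have e2 := keyB v b
  have e3 := keyC (show v - b ≤ v by linarith)
  have hc : c * (Φ v - Φ (v-b)) = ∫ t in Ioc (v-b) v, c * φf t := by
    rw [e3, ← integral_const_mul]
  have hsplit : (∫ t in Iic v, Real.exp (b^2/2 - b*t) * φf t)
      = (∫ t in Iic (v-b), Real.exp (b^2/2 - b*t) * φf t)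
        + ∫ t in Ioc (v-b) v, Real.exp (b^2/2 - b*t) * φf t := by
    have hu := setIntegral_union (Set.Iic_disjoint_Ioc le_rfl) measurableSet_Ioc
      (if1.integrableOn (s := Iic (v-b))) (if1.integrableOn (s := Ioc (v-b) v))
    rw [Iic_union_Ioc_eq_Iic (show v - b ≤ v by linarith)] at hu
    exact hu
  have hsub1 : (∫ t in Iic (v-b),
        (Real.exp (b^2/2 - b*t) * φf t - Real.exp (-b^2/2 - b*t) * φf t))
      = (∫ t in Iic (v-b), Real.exp (b^2/2 - b*t) * φf t)
        - ∫ t in Iic (v-b), Real.exp (-b^2/2 - b*t) * φf t :=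
    integral_sub if1.integrableOn if2.integrableOn
  have hsub2 : (∫ t in Ioc (v-b) v, (Real.exp (b^2/2 - b*t) * φf t - c * φf t))
      = (∫ t in Ioc (v-b) v, Real.exp (b^2/2 - b*t) * φf t)
        - ∫ t in Ioc (v-b) v, c * φf t :=
    integral_sub if1.integrableOn (gint.const_mul c).integrableOn
  have hkey : Real.exp (b^2) * Φ (v+b) - Φ v - c * (Φ v - Φ (v-b))
      = (∫ t in Iic (v-b),
          (Real.exp (b^2/2 - b*t) * φf t - Real.exp (-b^2/2 - b*t) * φf t))
        + ∫ t in Ioc (v-b) v, (Real.exp (b^2/2 - b*t) * φf t - c * φf t) := by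
    rw [hc, e1, e2, hsplit, hsub1, hsub2]; ring
  have hpos1 : 0 < ∫ t in Iic (v-b),
      (Real.exp (b^2/2 - b*t) * φf t - Real.exp (-b^2/2 - b*t) * φf t) := by
    refine posIic _ (if1.sub if2).integrableOn (fun t => ?_)
    have h1 : Real.exp (-b^2/2 - b*t) < Real.exp (b^2/2 - b*t) := by
      apply Real.exp_lt_exp.2; nlinarith
    have := φf_pos t
    nlinarith
  have hpos2 : 0 ≤ ∫ t in Ioc (v-b) v, (Real.exp (b^2/2 - b*t) * φf t - c * φf t) := by
    refine setIntegral_nonneg measurableSet_Ioc (fun t ht => ?_)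
    have h1 : c ≤ Real.exp (b^2/2 - b*t) := by
      rw [hcdef]; apply Real.exp_le_exp.2
      have := ht.2; nlinarith
    have := φf_pos t
    nlinarith
  have hNpos : 0 < Real.exp (b^2) * Φ (v+b) - Φ v - c * (Φ v - Φ (v-b)) := by
    rw [hkey]; linarith
  have hone : Φ (v+b) < 1 := Φ_lt_one _
  have h2 : Φ (v+b) - Φ v ≤ c * (Φ v - Φ (v-b)) := by
    rw [keyD v b hb.le, hc]
    refine setIntegral_mono_on if2.integrableOn (gint.const_mul c).integrableOn
      measurableSet_Ioc (fun t ht => ?_)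
    have h1 : Real.exp (-b^2/2 - b*t) ≤ c := by
      rw [hcdef]; apply Real.exp_le_exp.2
      have := ht.1; nlinarith
    have := φf_pos t
    nlinarith
  have hNup : Real.exp (b^2) * Φ (v+b) - Φ v - c * (Φ v - Φ (v-b)) < Real.exp (b^2) - 1 := by
    nlinarith [mul_pos (sub_pos.2 hexp) (sub_pos.2 hone)]
  exact ⟨div_pos hNpos hden, (div_lt_one hden).mpr hNup⟩
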